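/- The extended energy function e : ℝ^(d+2) → [0, ∞], defined by e(ρ, m, S) = |m|²/(2ρ) + c_v ρ^γ exp(S/(c_v ρ)) if ρ > 0, e(ρ, m, S) = 0 if ρ = 0, m = 0 and S ≤ 0, and e(ρ, m, S) = ∞ otherwise, is convex and lower semi-continuous on ℝ × ℝ^d × ℝ. -/

import Mathlib

open scoped ENNReal

section Helpers

open Real

private lemma comb_pos' {p q a b : ℝ} (hp : 0 < p) (hq : 0 < q) (ha : 0 ≤ a) (hb : 0 ≤ b)
    (hab : a + b = 1) : 0 < a * p + b * q := by
  rcases ha.eq_or_lt with h | h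
  · have hb1 : b = 1 := by linarith
    subst hb1; rw [← h]; simpa using hq
  · have := mul_nonneg hb hq.le
    nlinarith [mul_pos h hp]

private lemma sqdiv_convex' (s t p q a b : ℝ) (hp : 0 < p) (hq : 0 < q) (ha : 0 ≤ a) (hb : 0 ≤ b)
    (hab : a + b = 1) :
    (a * s + b * t) ^ 2 / (2 * (a * p + b * q)) ≤ a * (s ^ 2 / (2 * p)) + b * (t ^ 2 / (2 * q)) := by
  have hρ : 0 < a * p + b * q := comb_pos' hp hq ha hb hab
  have h1 : a * (s ^ 2 / (2 * p)) + b * (t ^ 2 / (2 * q))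
      = (a * s ^ 2 * q + b * t ^ 2 * p) / (2 * (p * q)) := by field_simp
  rw [h1, div_le_div_iff₀ (by positivity) (by positivity)]
  nlinarith [mul_nonneg (mul_nonneg ha hb) (sq_nonneg (s * q - t * p)), sq_nonneg (a*s+b*t)]

private lemma exp_persp' (p q S₁ S₂ a b : ℝ) (hp : 0 < p) (hq : 0 < q) (ha : 0 ≤ a) (hb : 0 ≤ b)
    (hab : a + b = 1) :
    (a * p + b * q) * Real.exp ((a * S₁ + b * S₂) / (a * p + b * q)) ≤
      a * (p * Real.exp (S₁ / p)) + b * (q * Real.exp (S₂ / q)) := by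
  have hρ : 0 < a * p + b * q := comb_pos' hp hq ha hb hab
  set ρ := a * p + b * q with hρdef
  have hw : a * p / ρ + b * q / ρ = 1 := by field_simp; exact hρdef.symm
  have hS : (a * S₁ + b * S₂) / ρ = (a * p / ρ) * (S₁ / p) + (b * q / ρ) * (S₂ / q) := by
    field_simp
  have hcx := convexOn_exp.2 (Set.mem_univ (S₁ / p)) (Set.mem_univ (S₂ / q))
    (by positivity : (0:ℝ) ≤ a * p / ρ) (by positivity : (0:ℝ) ≤ b * q / ρ) hw
  simp only [smul_eq_mul] at hcx
  rw [hS]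
  calc ρ * Real.exp (a * p / ρ * (S₁ / p) + b * q / ρ * (S₂ / q))
      ≤ ρ * (a * p / ρ * Real.exp (S₁ / p) + b * q / ρ * Real.exp (S₂ / q)) :=
        mul_le_mul_of_nonneg_left hcx hρ.le
    _ = a * (p * Real.exp (S₁ / p)) + b * (q * Real.exp (S₂ / q)) := by field_simp

private lemma pow_exp_eq' (γ ρ S : ℝ) (hγ : 1 < γ) (hρ : 0 < ρ) :
    (ρ * Real.exp ((γ - 1) / γ * S / ρ)) ^ γ = ρ ^ γ * Real.exp ((γ - 1) * S / ρ) := by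
  have hγ0 : (γ : ℝ) ≠ 0 := by positivity
  rw [Real.mul_rpow hρ.le (Real.exp_pos _).le, ← Real.exp_mul]
  congr 1
  field_simp

private lemma div_cv_eq' (γ cv S ρ : ℝ) (hγ : 1 < γ) (hcv : cv = 1 / (γ - 1)) (hρ : ρ ≠ 0) :
    S / (cv * ρ) = (γ - 1) * S / ρ := by
  have h1 : γ - 1 ≠ 0 := by intro h; linarith [sub_eq_zero.mp h]
  rw [hcv]; field_simp

private lemma internal_convex' (γ cv p q S₁ S₂ a b : ℝ) (hγ : 1 < γ) (hcv : cv = 1 / (γ - 1))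
    (hp : 0 < p) (hq : 0 < q) (ha : 0 ≤ a) (hb : 0 ≤ b) (hab : a + b = 1) :
    cv * (a * p + b * q) ^ γ * Real.exp ((a * S₁ + b * S₂) / (cv * (a * p + b * q))) ≤
      a * (cv * p ^ γ * Real.exp (S₁ / (cv * p))) + b * (cv * q ^ γ * Real.exp (S₂ / (cv * q))) := by
  have hcv0 : 0 < cv := by rw [hcv]; exact one_div_pos.mpr (by linarith)
  have hρ : 0 < a * p + b * q := comb_pos' hp hq ha hb hab
  set c : ℝ := (γ - 1) / γ with hc
  set u₁ : ℝ := p * Real.exp (c * S₁ / p) with hu₁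
  set u₂ : ℝ := q * Real.exp (c * S₂ / q) with hu₂
  have hu₁0 : 0 ≤ u₁ := mul_nonneg hp.le (Real.exp_pos _).le
  have hu₂0 : 0 ≤ u₂ := mul_nonneg hq.le (Real.exp_pos _).le
  have h1 : (a * p + b * q) * Real.exp ((c * (a * S₁ + b * S₂)) / (a * p + b * q)) ≤
      a * u₁ + b * u₂ := by
    have := exp_persp' p q (c * S₁) (c * S₂) a b hp hq ha hb hab
    have he : a * (c * S₁) + b * (c * S₂) = c * (a * S₁ + b * S₂) := by ring
    rw [he] at this
    exact this
  have h2 : ((a * p + b * q) * Real.exp ((c * (a * S₁ + b * S₂)) / (a * p + b * q))) ^ γ ≤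
      (a * u₁ + b * u₂) ^ γ := Real.rpow_le_rpow (by positivity) h1 (by positivity)
  have h3 : (a * u₁ + b * u₂) ^ γ ≤ a * u₁ ^ γ + b * u₂ ^ γ := by
    have := (convexOn_rpow hγ.le).2 (Set.mem_Ici.mpr hu₁0) (Set.mem_Ici.mpr hu₂0) ha hb hab
    simpa using this
  have key : ((a * p + b * q) * Real.exp (c * (a * S₁ + b * S₂) / (a * p + b * q))) ^ γ
      = (a * p + b * q) ^ γ * Real.exp ((a * S₁ + b * S₂) / (cv * (a * p + b * q))) := by
    rw [div_cv_eq' γ cv _ _ hγ hcv hρ.ne', ← pow_exp_eq' γ _ _ hγ hρ]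
  have k1 : u₁ ^ γ = p ^ γ * Real.exp (S₁ / (cv * p)) := by
    rw [div_cv_eq' γ cv _ _ hγ hcv hp.ne', ← pow_exp_eq' γ _ _ hγ hp]
  have k2 : u₂ ^ γ = q ^ γ * Real.exp (S₂ / (cv * q)) := by
    rw [div_cv_eq' γ cv _ _ hγ hcv hq.ne', ← pow_exp_eq' γ _ _ hγ hq]
  calc cv * (a * p + b * q) ^ γ * Real.exp ((a * S₁ + b * S₂) / (cv * (a * p + b * q)))
      = cv * ((a * p + b * q) * Real.exp (c * (a * S₁ + b * S₂) / (a * p + b * q))) ^ γ := by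
        rw [key]; ring
    _ ≤ cv * (a * u₁ ^ γ + b * u₂ ^ γ) :=
        mul_le_mul_of_nonneg_left (le_trans h2 h3) hcv0.le
    _ = a * (cv * p ^ γ * Real.exp (S₁ / (cv * p))) + b * (cv * q ^ γ * Real.exp (S₂ / (cv * q))) := by
        rw [k1, k2]; ring

private lemma kinetic_convex' {E : Type*} [NormedAddCommGroup E] [NormedSpace ℝ E]
    (m₁ m₂ : E) (p q a b : ℝ) (hp : 0 < p) (hq : 0 < q) (ha : 0 ≤ a) (hb : 0 ≤ b)
    (hab : a + b = 1) :
    ‖a • m₁ + b • m₂‖ ^ 2 / (2 * (a * p + b * q)) ≤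
      a * (‖m₁‖ ^ 2 / (2 * p)) + b * (‖m₂‖ ^ 2 / (2 * q)) := by
  have hρ : 0 < a * p + b * q := comb_pos' hp hq ha hb hab
  have hn : ‖a • m₁ + b • m₂‖ ≤ a * ‖m₁‖ + b * ‖m₂‖ := by
    refine (norm_add_le _ _).trans ?_
    rw [norm_smul, norm_smul, Real.norm_of_nonneg ha, Real.norm_of_nonneg hb]
  have hsq : ‖a • m₁ + b • m₂‖ ^ 2 ≤ (a * ‖m₁‖ + b * ‖m₂‖) ^ 2 :=
    pow_le_pow_left₀ (norm_nonneg _) hn 2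
  calc ‖a • m₁ + b • m₂‖ ^ 2 / (2 * (a * p + b * q))
      ≤ (a * ‖m₁‖ + b * ‖m₂‖) ^ 2 / (2 * (a * p + b * q)) := by
        exact div_le_div_of_nonneg_right hsq (by positivity) |>.trans_eq rfl
    _ ≤ a * (‖m₁‖ ^ 2 / (2 * p)) + b * (‖m₂‖ ^ 2 / (2 * q)) :=
        sqdiv_convex' _ _ p q a b hp hq ha hb hab

private lemma mixed_convex' (γ cv q S₁ S₂ t a b : ℝ) (hγ : 1 < γ) (hcv : cv = 1 / (γ - 1))
    (hq : 0 < q) (ht : 0 ≤ t) (hS₁ : S₁ ≤ 0) (ha : 0 ≤ a) (hb : 0 < b) (hab : a + b = 1) :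
    (b * t) ^ 2 / (2 * (b * q)) + cv * (b * q) ^ γ * Real.exp ((a * S₁ + b * S₂) / (cv * (b * q)))
      ≤ b * (t ^ 2 / (2 * q) + cv * q ^ γ * Real.exp (S₂ / (cv * q))) := by
  have hcv0 : 0 < cv := by rw [hcv]; exact one_div_pos.mpr (by linarith)
  have hb1 : b ≤ 1 := by linarith
  have hkin : (b * t) ^ 2 / (2 * (b * q)) = b * (t ^ 2 / (2 * q)) := by
    field_simp
  have hexp : Real.exp ((a * S₁ + b * S₂) / (cv * (b * q))) ≤ Real.exp (S₂ / (cv * q)) := by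
    apply Real.exp_le_exp.mpr
    have hd : 0 < cv * (b * q) := by positivity
    have h1 : (a * S₁ + b * S₂) / (cv * (b * q)) ≤ (b * S₂) / (cv * (b * q)) := by
      gcongr
      nlinarith [mul_nonpos_of_nonneg_of_nonpos ha hS₁]
    have h2 : (b * S₂) / (cv * (b * q)) = S₂ / (cv * q) := by
      field_simp
    rw [h2] at h1; exact h1
  have hbγ : (b * q) ^ γ ≤ b * q ^ γ := by
    rw [Real.mul_rpow hb.le hq.le]
    have : b ^ γ ≤ b ^ (1:ℝ) := Real.rpow_le_rpow_of_exponent_ge hb hb1 hγ.le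
    rw [Real.rpow_one] at this
    exact mul_le_mul_of_nonneg_right this (Real.rpow_nonneg hq.le γ)
  calc (b * t) ^ 2 / (2 * (b * q)) + cv * (b * q) ^ γ * Real.exp ((a * S₁ + b * S₂) / (cv * (b * q)))
      ≤ b * (t ^ 2 / (2 * q)) + cv * (b * q ^ γ) * Real.exp (S₂ / (cv * q)) := by
        rw [hkin]
        have t1 : cv * (b * q) ^ γ * Real.exp ((a * S₁ + b * S₂) / (cv * (b * q)))
            ≤ cv * (b * q) ^ γ * Real.exp (S₂ / (cv * q)) := by
          apply mul_le_mul_of_nonneg_left hexp (by positivity)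
        have t2 : cv * (b * q) ^ γ * Real.exp (S₂ / (cv * q))
            ≤ cv * (b * q ^ γ) * Real.exp (S₂ / (cv * q)) := by
          have := mul_le_mul_of_nonneg_left hbγ hcv0.le
          exact mul_le_mul_of_nonneg_right this (Real.exp_pos _).le
        linarith
    _ = b * (t ^ 2 / (2 * q) + cv * q ^ γ * Real.exp (S₂ / (cv * q))) := by ring

end Helpers

open Classical in
/-- The extended total energy `e(ρ, m, S)` with values in `[0, ∞]`. -/
noncomputable def energyExt (d : ℕ) (γ cv : ℝ) :
    ℝ × EuclideanSpace ℝ (Fin d) × ℝ → ℝ≥0∞ := fun x =>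
  if 0 < x.1 then
    ENNReal.ofReal (‖x.2.1‖ ^ 2 / (2 * x.1) + cv * x.1 ^ γ * Real.exp (x.2.2 / (cv * x.1)))
  else if x.1 = 0 ∧ x.2.1 = 0 ∧ x.2.2 ≤ 0 then 0 else ⊤

/-- The extended energy is convex and lower semi-continuous on `ℝ × ℝ^d × ℝ`. -/
theorem energyExt_convex_lowerSemicontinuous (d : ℕ) (hd : 1 ≤ d) (γ : ℝ) (hγ : 1 < γ)
    (cv : ℝ) (hcv : cv = 1 / (γ - 1)) :
    (∀ x y : ℝ × EuclideanSpace ℝ (Fin d) × ℝ, ∀ a b : ℝ, 0 ≤ a → 0 ≤ b → a + b = 1 →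
      energyExt d γ cv (a • x + b • y) ≤
        ENNReal.ofReal a * energyExt d γ cv x + ENNReal.ofReal b * energyExt d γ cv y) ∧
    LowerSemicontinuous (energyExt d γ cv) := by
  have hcv0 : 0 < cv := by rw [hcv]; exact one_div_pos.mpr (by linarith)
  have epos : ∀ (ρ : ℝ) (m : EuclideanSpace ℝ (Fin d)) (S : ℝ), 0 < ρ →
      energyExt d γ cv (ρ, m, S)
        = ENNReal.ofReal (‖m‖ ^ 2 / (2 * ρ) + cv * ρ ^ γ * Real.exp (S / (cv * ρ))) := by
    intro ρ m S h
    simp only [energyExt]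
    rw [if_pos h]
  have ezero : ∀ (ρ : ℝ) (m : EuclideanSpace ℝ (Fin d)) (S : ℝ), ρ = 0 → m = 0 → S ≤ 0 →
      energyExt d γ cv (ρ, m, S) = 0 := by
    intro ρ m S h1 h2 h3
    simp only [energyExt]
    rw [if_neg (by rw [h1]; exact lt_irrefl 0), if_pos ⟨h1, h2, h3⟩]
  have zeroPos : ∀ (m₂ : EuclideanSpace ℝ (Fin d)) (ρ₂ S₁ S₂ a b : ℝ), 0 < ρ₂ → S₁ ≤ 0 →
      0 ≤ a → 0 < b → a + b = 1 →
      energyExt d γ cv (b * ρ₂, b • m₂, a * S₁ + b * S₂) ≤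
        ENNReal.ofReal b * energyExt d γ cv (ρ₂, m₂, S₂) := by
    intro m₂ ρ₂ S₁ S₂ a b hρ₂ hS₁ ha hb hab
    have hFy0 : 0 ≤ ‖m₂‖ ^ 2 / (2 * ρ₂) + cv * ρ₂ ^ γ * Real.exp (S₂ / (cv * ρ₂)) := by
      have := Real.rpow_nonneg hρ₂.le γ
      positivity
    rw [epos _ _ _ (by positivity), epos _ _ _ hρ₂, ← ENNReal.ofReal_mul hb.le]
    apply ENNReal.ofReal_le_ofReal
    have := mixed_convex' γ cv ρ₂ S₁ S₂ ‖m₂‖ a b hγ hcv hρ₂ (norm_nonneg _) hS₁ ha hb hab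
    rw [norm_smul, Real.norm_of_nonneg hb.le]
    linarith
  constructor
  · intro x y a b ha hb hab
    by_cases hA : a = 0
    · have hb1 : b = 1 := by linarith
      subst hA hb1
      simp
    by_cases hB : b = 0
    · have ha1 : a = 1 := by linarith
      subst hB ha1
      simp
    have ha' : 0 < a := ha.lt_of_ne (Ne.symm hA)
    have hb' : 0 < b := hb.lt_of_ne (Ne.symm hB)
    by_cases hxT : energyExt d γ cv x = ⊤
    · rw [hxT, ENNReal.mul_top (by simpa [ENNReal.ofReal_eq_zero] using ha'), top_add]
      exact le_top
    by_cases hyT : energyExt d γ cv y = ⊤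
    · rw [hyT, ENNReal.mul_top (by simpa [ENNReal.ofReal_eq_zero] using hb'), add_top]
      exact le_top
    obtain ⟨ρ₁, m₁, S₁⟩ := x
    obtain ⟨ρ₂, m₂, S₂⟩ := y
    have hx : 0 < ρ₁ ∨ (ρ₁ = 0 ∧ m₁ = 0 ∧ S₁ ≤ 0) := by
      by_contra h
      rw [not_or] at h
      apply hxT
      simp only [energyExt]
      rw [if_neg h.1, if_neg h.2]
    have hy : 0 < ρ₂ ∨ (ρ₂ = 0 ∧ m₂ = 0 ∧ S₂ ≤ 0) := by
      by_contra h
      rw [not_or] at h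
      apply hyT
      simp only [energyExt]
      rw [if_neg h.1, if_neg h.2]
    have hcomb : a • (ρ₁, m₁, S₁) + b • ((ρ₂, m₂, S₂) : ℝ × EuclideanSpace ℝ (Fin d) × ℝ)
        = (a * ρ₁ + b * ρ₂, a • m₁ + b • m₂, a * S₁ + b * S₂) := rfl
    rw [hcomb]
    rcases hx with hx | ⟨hx1, hx2, hx3⟩ <;> rcases hy with hy | ⟨hy1, hy2, hy3⟩
    · -- both positive
      have hρ : 0 < a * ρ₁ + b * ρ₂ := comb_pos' hx hy ha hb hab
      have hFx0 : 0 ≤ ‖m₁‖ ^ 2 / (2 * ρ₁) + cv * ρ₁ ^ γ * Real.exp (S₁ / (cv * ρ₁)) := by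
        have := Real.rpow_nonneg hx.le γ; positivity
      have hFy0 : 0 ≤ ‖m₂‖ ^ 2 / (2 * ρ₂) + cv * ρ₂ ^ γ * Real.exp (S₂ / (cv * ρ₂)) := by
        have := Real.rpow_nonneg hy.le γ; positivity
      rw [epos _ _ _ hρ, epos _ _ _ hx, epos _ _ _ hy, ← ENNReal.ofReal_mul ha,
        ← ENNReal.ofReal_mul hb, ← ENNReal.ofReal_add (mul_nonneg ha hFx0) (mul_nonneg hb hFy0)]
      apply ENNReal.ofReal_le_ofReal
      have h1 := kinetic_convex' m₁ m₂ ρ₁ ρ₂ a b hx hy ha hb hab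
      have h2 := internal_convex' γ cv ρ₁ ρ₂ S₁ S₂ a b hγ hcv hx hy ha hb hab
      linarith
    · -- x positive, y zero
      subst hy1; subst hy2
      rw [ezero _ _ _ rfl rfl hy3, mul_zero, add_zero]
      have := zeroPos m₁ ρ₁ S₂ S₁ b a hx hy3 hb ha' (by linarith)
      simp only [mul_zero, add_zero, smul_zero, add_zero] at this ⊢
      rw [show a * S₁ + b * S₂ = b * S₂ + a * S₁ from add_comm _ _]
      exact this
    · -- x zero, y positive
      subst hx1; subst hx2
      rw [ezero _ _ _ rfl rfl hx3, mul_zero, zero_add]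
      have := zeroPos m₂ ρ₂ S₁ S₂ a b hy hx3 ha hb' hab
      simpa using this
    · -- both zero
      subst hx1; subst hx2; subst hy1; subst hy2
      have hSc : a * S₁ + b * S₂ ≤ 0 := by
        nlinarith [mul_nonpos_of_nonneg_of_nonpos ha hx3,
          mul_nonpos_of_nonneg_of_nonpos hb hy3]
      rw [ezero _ _ _ rfl rfl hx3, ezero _ _ _ rfl rfl hy3,
        ezero (a * 0 + b * 0) _ _ (by ring) (by simp) hSc]
      simp
  · -- lower semicontinuity
    intro x
    rcases lt_trichotomy x.1 0 with hneg | hzero | hpos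
    · -- negative density: ⊤ on a neighborhood
      intro z hz
      have hev : ∀ᶠ w : ℝ × EuclideanSpace ℝ (Fin d) × ℝ in nhds x, w.1 < 0 :=
        continuousAt_fst.eventually_mem (isOpen_Iio.mem_nhds (show x.1 ∈ Set.Iio 0 from hneg))
      filter_upwards [hev] with w hw
      have hT : energyExt d γ cv w = ⊤ := by
        simp only [energyExt]
        rw [if_neg (asymm hw), if_neg (fun hc => absurd hc.1 (ne_of_lt hw))]
      rw [hT]
      exact hz.trans_le le_top
    · -- zero density
      by_cases hm : x.2.1 = 0
      · by_cases hS : x.2.2 ≤ 0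
        · -- the point where the value is 0
          intro z hz
          have h0 : energyExt d γ cv x = 0 := by
            simp only [energyExt]
            rw [if_neg (by rw [hzero]; exact lt_irrefl 0), if_pos ⟨hzero, hm, hS⟩]
          rw [h0] at hz
          exact absurd hz (by simp)
        · -- positive entropy blow-up
          push_neg at hS
          intro z hz
          have hzT : z < ⊤ := hz.trans_le le_top
          set s : ℝ := x.2.2 / 2 with hs
          have hs0 : 0 < s := half_pos hS
          set n : ℕ := ⌈γ⌉₊ + 1 with hn
          have hγn : γ < n := lt_of_le_of_lt (Nat.le_ceil γ) (by exact_mod_cast Nat.lt_succ_self _)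
          have hn0 : (0:ℝ) < n := by linarith
          set K : ℝ := cv * (s / (cv * n)) ^ n with hK
          have hK0 : 0 < K := by positivity
          set C : ℝ := z.toReal + 1 with hC
          have hC0 : 0 < C := by positivity
          have hzC : z < ENNReal.ofReal C := by
            rw [ENNReal.lt_ofReal_iff_toReal_lt hzT.ne]
            exact lt_add_one _
          set ε : ℝ := (C / K) ^ ((γ - (n:ℝ))⁻¹) with hε
          have hε0 : 0 < ε := Real.rpow_pos_of_pos (by positivity) _
          have hεpow : K * ε ^ (γ - (n:ℝ)) = C := by
            rw [hε, ← Real.rpow_mul (by positivity),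
              inv_mul_cancel₀ (by intro h0; rw [sub_eq_zero] at h0; linarith : γ - (n:ℝ) ≠ 0),
              Real.rpow_one]
            field_simp
          have hev1 : ∀ᶠ w : ℝ × EuclideanSpace ℝ (Fin d) × ℝ in nhds x, w.1 < ε :=
            continuousAt_fst.eventually_mem (isOpen_Iio.mem_nhds (by rw [hzero]; exact hε0))
          have hev2 : ∀ᶠ w : ℝ × EuclideanSpace ℝ (Fin d) × ℝ in nhds x, s < w.2.2 :=
            (continuousAt_snd.snd).eventually_mem (isOpen_Ioi.mem_nhds (by
              show s < x.2.2
              rw [hs]; linarith))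
          filter_upwards [hev1, hev2] with w hw1 hw2
          by_cases hw : 0 < w.1
          · have hd0 : 0 < cv * w.1 := by positivity
            have ht0 : 0 < s / (cv * w.1) := by positivity
            have e1 : s / (cv * w.1) / n ≤ Real.exp (s / (cv * w.1) / n) := by
              linarith [Real.add_one_le_exp (s / (cv * w.1) / n)]
            have e2 : (s / (cv * w.1) / n) ^ n ≤ Real.exp (s / (cv * w.1)) := by
              calc (s / (cv * w.1) / n) ^ n ≤ (Real.exp (s / (cv * w.1) / n)) ^ n :=
                    pow_le_pow_left₀ (by positivity) e1 n
                _ = Real.exp (s / (cv * w.1)) := by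
                    rw [← Real.exp_nat_mul]
                    congr 1
                    field_simp
            have e3 : Real.exp (s / (cv * w.1)) ≤ Real.exp (w.2.2 / (cv * w.1)) :=
              Real.exp_le_exp.mpr ((div_le_div_iff_of_pos_right hd0).mpr hw2.le)
            have id1 : cv * w.1 ^ γ * (s / (cv * w.1) / n) ^ n = K * w.1 ^ (γ - (n:ℝ)) := by
              have hb : s / (cv * w.1) / (n:ℝ) = s / (cv * (n:ℝ)) * w.1⁻¹ := by
                field_simp
                try exact Or.inl trivial
                try simp
              have i1 : (s / (cv * w.1) / n) ^ n = (s / (cv * n)) ^ n * (w.1⁻¹) ^ n := by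
                rw [hb, mul_pow]
              have i2 : (w.1⁻¹ : ℝ) ^ n = w.1 ^ (-(n:ℝ)) := by
                rw [Real.rpow_neg hw.le, Real.rpow_natCast]
                exact inv_pow _ _
              have i3 : w.1 ^ γ * w.1 ^ (-(n:ℝ)) = w.1 ^ (γ - (n:ℝ)) := by
                rw [← Real.rpow_add hw]
                ring_nf
              rw [i1, i2, hK]
              rw [show cv * w.1 ^ γ * ((s / (cv * ↑n)) ^ n * w.1 ^ (-(n:ℝ)))
                  = cv * (s / (cv * ↑n)) ^ n * (w.1 ^ γ * w.1 ^ (-(n:ℝ))) from by ring, i3]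
            have mono : ε ^ (γ - (n:ℝ)) ≤ w.1 ^ (γ - (n:ℝ)) :=
              Real.rpow_le_rpow_of_nonpos hw hw1.le (by linarith)
            have hstep : C ≤ cv * w.1 ^ γ * Real.exp (w.2.2 / (cv * w.1)) := by
              have c1 : cv * w.1 ^ γ * (s / (cv * w.1) / n) ^ n
                  ≤ cv * w.1 ^ γ * Real.exp (w.2.2 / (cv * w.1)) := by
                apply mul_le_mul_of_nonneg_left (e2.trans e3)
                exact mul_nonneg hcv0.le (Real.rpow_nonneg hw.le _)
              have c2 : C ≤ K * w.1 ^ (γ - (n:ℝ)) := by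
                rw [← hεpow]
                exact mul_le_mul_of_nonneg_left mono hK0.le
              rw [id1] at c1
              linarith
            have hkin : (0:ℝ) ≤ ‖w.2.1‖ ^ 2 / (2 * w.1) := by positivity
            have hle : ENNReal.ofReal C ≤ energyExt d γ cv w := by
              simp only [energyExt]
              rw [if_pos hw]
              exact ENNReal.ofReal_le_ofReal (by linarith)
            exact lt_of_lt_of_le hzC hle
          · have hT : energyExt d γ cv w = ⊤ := by
              simp only [energyExt]
              rw [if_neg hw, if_neg (fun hc => absurd hc.2.2 (not_le.mpr (lt_trans hs0 hw2)))]
            rw [hT]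
            exact hzT
      · -- nonzero momentum blow-up
        intro z hz
        have hzT : z < ⊤ := hz.trans_le le_top
        set r : ℝ := ‖x.2.1‖ / 2 with hr
        have hr0 : 0 < r := half_pos (norm_pos_iff.mpr hm)
        set C : ℝ := z.toReal + 1 with hC
        have hC0 : 0 < C := by positivity
        have hzC : z < ENNReal.ofReal C := by
          rw [ENNReal.lt_ofReal_iff_toReal_lt hzT.ne]
          exact lt_add_one _
        set ε : ℝ := r ^ 2 / (2 * C) with hε
        have hε0 : 0 < ε := by positivity
        have hev1 : ∀ᶠ w : ℝ × EuclideanSpace ℝ (Fin d) × ℝ in nhds x, w.1 < ε :=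
          continuousAt_fst.eventually_mem (isOpen_Iio.mem_nhds (by rw [hzero]; exact hε0))
        have hev2 : ∀ᶠ w : ℝ × EuclideanSpace ℝ (Fin d) × ℝ in nhds x, r < ‖w.2.1‖ :=
          ((continuousAt_snd.fst).norm).eventually_mem (isOpen_Ioi.mem_nhds (by
            show r < ‖x.2.1‖
            rw [hr]; linarith [norm_pos_iff.mpr hm]))
        filter_upwards [hev1, hev2] with w hw1 hw2
        by_cases hw : 0 < w.1
        · have hb1 : C ≤ ‖w.2.1‖ ^ 2 / (2 * w.1) := by
            have hq : r ^ 2 / (2 * ε) = C := by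
              rw [hε]
              field_simp
            have := div_le_div₀ (by positivity : (0:ℝ) ≤ ‖w.2.1‖ ^ 2)
              (pow_le_pow_left₀ hr0.le hw2.le 2) (by positivity : (0:ℝ) < 2 * w.1)
              (by linarith : 2 * w.1 ≤ 2 * ε)
            linarith [hq ▸ this]
          have hent : (0:ℝ) ≤ cv * w.1 ^ γ * Real.exp (w.2.2 / (cv * w.1)) :=
            mul_nonneg (mul_nonneg hcv0.le (Real.rpow_nonneg hw.le _)) (Real.exp_pos _).le
          have hle : ENNReal.ofReal C ≤ energyExt d γ cv w := by
            simp only [energyExt]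
            rw [if_pos hw]
            exact ENNReal.ofReal_le_ofReal (by linarith)
          exact lt_of_lt_of_le hzC hle
        · have hT : energyExt d γ cv w = ⊤ := by
            simp only [energyExt]
            rw [if_neg hw, if_neg (fun hc => absurd hc.2.1
              (fun h0 => by rw [h0] at hw2; simp at hw2; linarith))]
          rw [hT]
          exact hzT
    · -- positive density: continuity
      have hne1 : (2:ℝ) * x.1 ≠ 0 := (mul_pos two_pos hpos).ne'
      have hne2 : cv * x.1 ≠ 0 := (mul_pos hcv0 hpos).ne'
      have hcont : ContinuousAt (fun w : ℝ × EuclideanSpace ℝ (Fin d) × ℝ =>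
          ENNReal.ofReal (‖w.2.1‖ ^ 2 / (2 * w.1)
            + cv * w.1 ^ γ * Real.exp (w.2.2 / (cv * w.1)))) x := by
        apply ENNReal.continuous_ofReal.continuousAt.comp
        apply ContinuousAt.add
        · exact ((continuousAt_snd.fst).norm.pow 2).div
            (continuousAt_const.mul continuousAt_fst) hne1
        · exact (continuousAt_const.mul
            (ContinuousAt.rpow_const continuousAt_fst (Or.inl hpos.ne'))).mul
            (((continuousAt_snd.snd).div
              (continuousAt_const.mul continuousAt_fst) hne2).rexp)
      intro z hz
      have hx_eq : energyExt d γ cv x = ENNReal.ofReal (‖x.2.1‖ ^ 2 / (2 * x.1)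
          + cv * x.1 ^ γ * Real.exp (x.2.2 / (cv * x.1))) := by
        simp only [energyExt]
        rw [if_pos hpos]
      rw [hx_eq] at hz
      have hev1 := hcont.eventually_mem (isOpen_Ioi.mem_nhds hz)
      have hev2 : ∀ᶠ w : ℝ × EuclideanSpace ℝ (Fin d) × ℝ in nhds x, 0 < w.1 :=
        continuousAt_fst.eventually_mem (isOpen_Ioi.mem_nhds hpos)
      filter_upwards [hev1, hev2] with w h1 h2
      simp only [energyExt]
      rw [if_pos h2]
      exact h1
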